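/- Let f : ℝ^d → ℝ^d satisfy |f(z) − f(z')| ≤ L̂_f (1 + |z|^q + |z'|^q)|z − z'| for some L̂_f, q > 0; let u satisfy |u(x, μ) − u(x', μ)| ≤ L̂_u (1 + |x|^q + |x'|^q)|x − x'| for every probability measure μ and be Lipschitz along empirical measures with constant L_ũ ≥ 0. Then with C := max{9 L̂_u², 3 L_ũ, 9 L̂_f²}, for every N ≥ 1, all x, x' ∈ ℝ^d and all a, a' ∈ (ℝ^d)^N: |v(x, μ^a) − v(x', μ^{a'})|² ≤ C [ (1 + |x|^{2q} + |x'|^{2q}) |x − x'|² + (1/N) ∑_{j=1}^N |a_j − a'_j|² + (1/N) ∑_{j=1}^N (1 + |x − a_j|^{2q} + |x' − a'_j|^{2q}) |(x − a_j) − (x' − a'_j)|² ]. -/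

import Mathlib

open RealInnerProductSpace MeasureTheory

/-- The empirical measure `μ^a := (1/N) ∑_{j=1}^N δ_{a_j}` of an `N`-tuple of points. -/
noncomputable def empMeas {d N : ℕ} (a : Fin N → EuclideanSpace ℝ (Fin d)) :
    Measure (EuclideanSpace ℝ (Fin d)) :=
  (N : ENNReal)⁻¹ • ∑ j, Measure.dirac (a j)

/-- The interaction drift `v` evaluated along an empirical measure:
`v(x, μ^a) = u(x, μ^a) + (1/N) ∑_j f(x − a_j)`. -/
noncomputable def vEmp {d N : ℕ}
    (f : EuclideanSpace ℝ (Fin d) → EuclideanSpace ℝ (Fin d))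
    (u : EuclideanSpace ℝ (Fin d) → Measure (EuclideanSpace ℝ (Fin d)) →
      EuclideanSpace ℝ (Fin d))
    (x : EuclideanSpace ℝ (Fin d)) (a : Fin N → EuclideanSpace ℝ (Fin d)) :
    EuclideanSpace ℝ (Fin d) :=
  u x (empMeas a) + (N : ℝ)⁻¹ • ∑ j, f (x - a j)

lemma empMeas_isProb {d N : ℕ} (hN : 1 ≤ N) (a : Fin N → EuclideanSpace ℝ (Fin d)) :
    IsProbabilityMeasure (empMeas a) := by
  constructor
  have hN0 : (N : ENNReal) ≠ 0 := by exact_mod_cast Nat.one_le_iff_ne_zero.mp hN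
  rw [empMeas, Measure.smul_apply, Measure.finset_sum_apply]
  simp only [Measure.dirac_apply_of_mem (Set.mem_univ _), Finset.sum_const,
    Finset.card_univ, Fintype.card_fin, nsmul_eq_mul, mul_one, smul_eq_mul]
  exact ENNReal.inv_mul_cancel hN0 (ENNReal.natCast_ne_top N)

lemma rpow_sq_eq (x : ℝ) (hx : 0 ≤ x) (q : ℝ) : (x ^ q) ^ (2 : ℕ) = x ^ (2 * q) := by
  rw [← Real.rpow_natCast (x ^ q) 2, ← Real.rpow_mul hx]
  norm_num [mul_comm]

lemma sq_bound_aux (L p p' r g : ℝ) (hL : 0 ≤ L) (hp : 0 ≤ p) (hp' : 0 ≤ p')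
    (hr : 0 ≤ r) (hg : 0 ≤ g) (h : g ≤ L * (1 + p + p') * r) :
    g ^ 2 ≤ 3 * L ^ 2 * (1 + p ^ 2 + p' ^ 2) * r ^ 2 := by
  have h1 : g ^ 2 ≤ (L * (1 + p + p') * r) ^ 2 := by
    apply pow_le_pow_left₀ hg h
  have key : (1 + p + p') ^ 2 ≤ 3 * (1 + p ^ 2 + p' ^ 2) := by
    nlinarith [sq_nonneg (p - p'), sq_nonneg (p - 1), sq_nonneg (p' - 1)]
  calc g ^ 2 ≤ (L * (1 + p + p') * r) ^ 2 := h1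
    _ = L ^ 2 * (1 + p + p') ^ 2 * r ^ 2 := by ring
    _ ≤ L ^ 2 * (3 * (1 + p ^ 2 + p' ^ 2)) * r ^ 2 := by
        gcongr
    _ = 3 * L ^ 2 * (1 + p ^ 2 + p' ^ 2) * r ^ 2 := by ring

/-- Local Lipschitz bound for the interaction drift along empirical
measures with the explicit constant `C = max{9L̂_u², 3L_ũ, 9L̂_f²}`. -/
theorem vEmp_local_lipschitz_bound (d : ℕ) (hd : 1 ≤ d)
    (f : EuclideanSpace ℝ (Fin d) → EuclideanSpace ℝ (Fin d))
    (u : EuclideanSpace ℝ (Fin d) → Measure (EuclideanSpace ℝ (Fin d)) →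
      EuclideanSpace ℝ (Fin d))
    (Lfh Luh q : ℝ) (hLfh : 0 < Lfh) (hLuh : 0 < Luh) (hq : 0 < q)
    (Lut : ℝ) (hLut : 0 ≤ Lut)
    (hfloc : ∀ z z' : EuclideanSpace ℝ (Fin d),
      ‖f z - f z'‖ ≤ Lfh * (1 + ‖z‖ ^ q + ‖z'‖ ^ q) * ‖z - z'‖)
    (huloc : ∀ μ : Measure (EuclideanSpace ℝ (Fin d)), IsProbabilityMeasure μ →
      ∀ x x' : EuclideanSpace ℝ (Fin d),
        ‖u x μ - u x' μ‖ ≤ Luh * (1 + ‖x‖ ^ q + ‖x'‖ ^ q) * ‖x - x'‖)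
    (huemp : ∀ (N : ℕ) (x : EuclideanSpace ℝ (Fin d))
        (a b : Fin N → EuclideanSpace ℝ (Fin d)),
      ‖u x (empMeas a) - u x (empMeas b)‖ ^ 2 ≤ Lut / N * ∑ j, ‖a j - b j‖ ^ 2) :
    ∀ (N : ℕ), 1 ≤ N →
      ∀ (x x' : EuclideanSpace ℝ (Fin d)) (a a' : Fin N → EuclideanSpace ℝ (Fin d)),
        ‖vEmp f u x a - vEmp f u x' a'‖ ^ 2 ≤
          max (max (9 * Luh ^ 2) (3 * Lut)) (9 * Lfh ^ 2) *
            ((1 + ‖x‖ ^ (2 * q) + ‖x'‖ ^ (2 * q)) * ‖x - x'‖ ^ 2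
              + (N : ℝ)⁻¹ * ∑ j, ‖a j - a' j‖ ^ 2
              + (N : ℝ)⁻¹ * ∑ j,
                  (1 + ‖x - a j‖ ^ (2 * q) + ‖x' - a' j‖ ^ (2 * q))
                    * ‖(x - a j) - (x' - a' j)‖ ^ 2) := by
  intro N hN x x' a a'
  haveI : IsProbabilityMeasure (empMeas a') := empMeas_isProb hN a'
  have hNR : (0 : ℝ) < N := by exact_mod_cast hN
  set C : ℝ := max (max (9 * Luh ^ 2) (3 * Lut)) (9 * Lfh ^ 2) with hC
  set A := u x (empMeas a) - u x (empMeas a') with hA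
  set B := u x (empMeas a') - u x' (empMeas a') with hB
  set g : Fin N → EuclideanSpace ℝ (Fin d) := fun j => f (x - a j) - f (x' - a' j) with hg
  have hv : vEmp f u x a - vEmp f u x' a' = A + B + (N : ℝ)⁻¹ • ∑ j, g j := by
    simp only [vEmp, hA, hB, hg, Finset.sum_sub_distrib, smul_sub]
    abel
  -- set the three target terms
  set T1 : ℝ := (1 + ‖x‖ ^ (2 * q) + ‖x'‖ ^ (2 * q)) * ‖x - x'‖ ^ 2 with hT1
  set T2 : ℝ := (N : ℝ)⁻¹ * ∑ j, ‖a j - a' j‖ ^ 2 with hT2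
  set T3 : ℝ := (N : ℝ)⁻¹ * ∑ j, (1 + ‖x - a j‖ ^ (2 * q) + ‖x' - a' j‖ ^ (2 * q))
      * ‖(x - a j) - (x' - a' j)‖ ^ 2 with hT3
  have hcoef : ∀ y y' : EuclideanSpace ℝ (Fin d),
      0 ≤ 1 + ‖y‖ ^ (2 * q) + ‖y'‖ ^ (2 * q) := fun y y' =>
    add_nonneg (add_nonneg zero_le_one (Real.rpow_nonneg (norm_nonneg _) _))
      (Real.rpow_nonneg (norm_nonneg _) _)
  have hT1n : 0 ≤ T1 := mul_nonneg (hcoef x x') (pow_nonneg (norm_nonneg _) 2)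
  have hT2n : 0 ≤ T2 := mul_nonneg (inv_nonneg.mpr hNR.le)
    (Finset.sum_nonneg fun j _ => pow_nonneg (norm_nonneg _) 2)
  have hT3n : 0 ≤ T3 := mul_nonneg (inv_nonneg.mpr hNR.le)
    (Finset.sum_nonneg fun j _ => mul_nonneg (hcoef _ _) (pow_nonneg (norm_nonneg _) 2))
  -- bound on A
  have hAb : ‖A‖ ^ 2 ≤ Lut * T2 := by
    have h := huemp N x a a'
    rw [hT2]
    calc ‖A‖ ^ 2 ≤ Lut / N * ∑ j, ‖a j - a' j‖ ^ 2 := h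
      _ = Lut * ((N : ℝ)⁻¹ * ∑ j, ‖a j - a' j‖ ^ 2) := by ring
  -- bound on B
  have hBb : ‖B‖ ^ 2 ≤ 3 * Luh ^ 2 * T1 := by
    have h := huloc (empMeas a') inferInstance x x'
    have := sq_bound_aux Luh (‖x‖ ^ q) (‖x'‖ ^ q) ‖x - x'‖ ‖B‖ hLuh.le
      (Real.rpow_nonneg (norm_nonneg _) _) (Real.rpow_nonneg (norm_nonneg _) _)
      (norm_nonneg _) (norm_nonneg _) h
    rw [rpow_sq_eq _ (norm_nonneg _), rpow_sq_eq _ (norm_nonneg _)] at this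
    calc ‖B‖ ^ 2 ≤ 3 * Luh ^ 2 * (1 + ‖x‖ ^ (2 * q) + ‖x'‖ ^ (2 * q)) * ‖x - x'‖ ^ 2 := this
      _ = 3 * Luh ^ 2 * T1 := by rw [hT1]; ring
  -- bound on the f part
  have hgj : ∀ j, ‖g j‖ ^ 2 ≤ 3 * Lfh ^ 2 *
      ((1 + ‖x - a j‖ ^ (2 * q) + ‖x' - a' j‖ ^ (2 * q))
        * ‖(x - a j) - (x' - a' j)‖ ^ 2) := by
    intro j
    have h := hfloc (x - a j) (x' - a' j)
    have := sq_bound_aux Lfh (‖x - a j‖ ^ q) (‖x' - a' j‖ ^ q)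
      ‖(x - a j) - (x' - a' j)‖ ‖g j‖ hLfh.le
      (Real.rpow_nonneg (norm_nonneg _) _) (Real.rpow_nonneg (norm_nonneg _) _)
      (norm_nonneg _) (norm_nonneg _) h
    rw [rpow_sq_eq _ (norm_nonneg _), rpow_sq_eq _ (norm_nonneg _)] at this
    linarith
  have hFb : ‖(N : ℝ)⁻¹ • ∑ j, g j‖ ^ 2 ≤ 3 * Lfh ^ 2 * T3 := by
    have h1 : ‖(N : ℝ)⁻¹ • ∑ j, g j‖ ^ 2 = ((N : ℝ)⁻¹) ^ 2 * ‖∑ j, g j‖ ^ 2 := by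
      rw [norm_smul]
      simp [abs_of_nonneg (inv_nonneg.mpr hNR.le), mul_pow]
    have h2 : ‖∑ j, g j‖ ≤ ∑ j, ‖g j‖ := norm_sum_le _ _
    have h3 : (∑ j, ‖g j‖) ^ 2 ≤ (N : ℝ) * ∑ j, ‖g j‖ ^ 2 := by
      have := sq_sum_le_card_mul_sum_sq (s := Finset.univ) (f := fun j => ‖g j‖)
      simpa using this
    have h4 : ‖∑ j, g j‖ ^ 2 ≤ (N : ℝ) * ∑ j, ‖g j‖ ^ 2 := by
      calc ‖∑ j, g j‖ ^ 2 ≤ (∑ j, ‖g j‖) ^ 2 :=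
            pow_le_pow_left₀ (norm_nonneg _) h2 2
        _ ≤ _ := h3
    have h5 : ∑ j, ‖g j‖ ^ 2 ≤ 3 * Lfh ^ 2 * ∑ j, (1 + ‖x - a j‖ ^ (2 * q)
        + ‖x' - a' j‖ ^ (2 * q)) * ‖(x - a j) - (x' - a' j)‖ ^ 2 := by
      rw [Finset.mul_sum]
      exact Finset.sum_le_sum fun j _ => hgj j
    calc ‖(N : ℝ)⁻¹ • ∑ j, g j‖ ^ 2
        = ((N : ℝ)⁻¹) ^ 2 * ‖∑ j, g j‖ ^ 2 := h1
      _ ≤ ((N : ℝ)⁻¹) ^ 2 * ((N : ℝ) * ∑ j, ‖g j‖ ^ 2) := by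
          apply mul_le_mul_of_nonneg_left h4 (sq_nonneg _)
      _ = (N : ℝ)⁻¹ * ∑ j, ‖g j‖ ^ 2 := by
          field_simp
      _ ≤ (N : ℝ)⁻¹ * (3 * Lfh ^ 2 * ∑ j, (1 + ‖x - a j‖ ^ (2 * q)
            + ‖x' - a' j‖ ^ (2 * q)) * ‖(x - a j) - (x' - a' j)‖ ^ 2) := by
          apply mul_le_mul_of_nonneg_left h5 (inv_nonneg.mpr hNR.le)
      _ = 3 * Lfh ^ 2 * T3 := by rw [hT3]; ring
  -- combine
  have htri : ‖A + B + (N : ℝ)⁻¹ • ∑ j, g j‖ ^ 2 ≤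
      3 * (‖A‖ ^ 2 + ‖B‖ ^ 2 + ‖(N : ℝ)⁻¹ • ∑ j, g j‖ ^ 2) := by
    have h := norm_add₃_le (a := A) (b := B) (c := (N : ℝ)⁻¹ • ∑ j, g j)
    have h' := pow_le_pow_left₀ (norm_nonneg (A + B + (N : ℝ)⁻¹ • ∑ j, g j)) h 2
    nlinarith [sq_nonneg (‖A‖ - ‖B‖), sq_nonneg (‖A‖ - ‖(N : ℝ)⁻¹ • ∑ j, g j‖),
      sq_nonneg (‖B‖ - ‖(N : ℝ)⁻¹ • ∑ j, g j‖)]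
  have hC1 : 9 * Luh ^ 2 ≤ C := le_max_of_le_left (le_max_left _ _)
  have hC2 : 3 * Lut ≤ C := le_max_of_le_left (le_max_right _ _)
  have hC3 : 9 * Lfh ^ 2 ≤ C := le_max_right _ _
  calc ‖vEmp f u x a - vEmp f u x' a'‖ ^ 2
      = ‖A + B + (N : ℝ)⁻¹ • ∑ j, g j‖ ^ 2 := by rw [hv]
    _ ≤ 3 * (‖A‖ ^ 2 + ‖B‖ ^ 2 + ‖(N : ℝ)⁻¹ • ∑ j, g j‖ ^ 2) := htri
    _ ≤ 3 * (Lut * T2 + 3 * Luh ^ 2 * T1 + 3 * Lfh ^ 2 * T3) := by linarith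
    _ = (9 * Luh ^ 2) * T1 + (3 * Lut) * T2 + (9 * Lfh ^ 2) * T3 := by ring
    _ ≤ C * T1 + C * T2 + C * T3 :=
        add_le_add (add_le_add (mul_le_mul_of_nonneg_right hC1 hT1n)
          (mul_le_mul_of_nonneg_right hC2 hT2n)) (mul_le_mul_of_nonneg_right hC3 hT3n)
    _ = C * (T1 + T2 + T3) := by ring
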